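/- Let n ≥ 1 and let A ⊆ Sⁿ be a nonempty convex subset. Then the interior of A in the subspace topology of Sⁿ ∩ span(A) is nonempty, where span(A) is the linear span of A in ℝ^{n+1}. (Lemma 2.2 of the paper.) -/

import Mathlib

set_option maxHeartbeats 1000000


open scoped RealInnerProductSpace

noncomputable section

/-- `Esp n` is `ℝ^{n+1}` with its standard inner product. -/
abbrev Esp (n : ℕ) : Type := EuclideanSpace ℝ (Fin (n + 1))

/-- The unit sphere `Sⁿ ⊆ ℝ^{n+1}`. -/
def sphereSet (n : ℕ) : Set (Esp n) := {x | ‖x‖ = 1}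

/-- A convex segment in `Sⁿ`: `{(cos t)·u + (sin t)·v : 0 ≤ t ≤ a}` for an
orthonormal pair `u, v` and some `a ∈ [0, π]`. -/
def IsConvexSegment {n : ℕ} (S : Set (Esp n)) : Prop :=
  ∃ (u v : Esp n) (a : ℝ), ‖u‖ = 1 ∧ ‖v‖ = 1 ∧ ⟪u, v⟫ = 0 ∧
    0 ≤ a ∧ a ≤ Real.pi ∧
    S = (fun t : ℝ => Real.cos t • u + Real.sin t • v) '' Set.Icc 0 a

/-- A subset of `Sⁿ` is convex if any two of its points are contained in a
convex segment contained in the set. -/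
def SphConvex {n : ℕ} (A : Set (Esp n)) : Prop :=
  ∀ x ∈ A, ∀ y ∈ A, ∃ S : Set (Esp n), IsConvexSegment S ∧ S ⊆ A ∧ x ∈ S ∧ y ∈ S

/-- Key real-arithmetic bound. -/
lemma aux_ub {r C S c s : ℝ} (hr : 0 < r) (hr2 : r ^ 2 = C ^ 2 + S ^ 2)
    (hpy : c ^ 2 + s ^ 2 = 1) (hs : 0 ≤ s) (hS : 0 ≤ S) (hB : 0 ≤ S * c - C * s)
    (hne : c = -1 → 0 ≤ C * c + S * s) : C ≤ r * c := by
  by_cases h : 0 < r + (C * c + S * s)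
  · have key : (r + (C * c + S * s)) * (r * c - C) = (S * c - C * s) * (S + r * s) := by
      linear_combination c * hr2 + r * C * hpy
    have h2 : 0 ≤ (S * c - C * s) * (S + r * s) :=
      mul_nonneg hB (add_nonneg hS (mul_nonneg hr.le hs))
    by_contra hcon
    push_neg at hcon
    have h3 : (r + (C * c + S * s)) * (r * c - C) < 0 :=
      mul_neg_of_pos_of_neg h (by linarith)
    rw [key] at h3; linarith
  · push_neg at h
    have hDneg : C * c + S * s ≤ -r := by linarith
    have hBD : (S * c - C * s) ^ 2 + (C * c + S * s) ^ 2 = r ^ 2 := by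
      linear_combination (C ^ 2 + S ^ 2) * hpy - hr2
    have hDsq : r ^ 2 ≤ (C * c + S * s) ^ 2 := by
      nlinarith [mul_nonneg (by linarith : (0:ℝ) ≤ -r - (C * c + S * s))
        (by linarith : (0:ℝ) ≤ r - (C * c + S * s))]
    have hB0 : S * c - C * s = 0 := by
      have h4 : (S * c - C * s) ^ 2 = 0 := le_antisymm (by linarith) (sq_nonneg _)
      exact pow_eq_zero_iff two_ne_zero |>.1 h4
    have hSD : S = (C * c + S * s) * s := by
      linear_combination (-S) * hpy + c * hB0
    have hs0 : s = 0 := by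
      rcases hs.lt_or_eq with h' | h'
      · exfalso
        have h5 : 0 < -(C * c + S * s) := by linarith
        nlinarith [mul_pos h5 h']
      · exact h'.symm
    have hc2 : (c - 1) * (c + 1) = 0 := by linear_combination hpy - s * hs0
    rcases mul_eq_zero.1 hc2 with h' | h'
    · have hc1 : c = 1 := by linarith
      rw [hc1, hs0] at hDneg
      rw [hc1]
      simp only [mul_one, mul_zero, add_zero] at hDneg
      linarith
    · have hc1 : c = -1 := by linarith
      have h0 := hne hc1
      linarith

lemma aux_lemA {n : ℕ} (u v : Esp n) (hu : ‖u‖ = 1) (hv : ‖v‖ = 1)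
    (huv : ⟪u, v⟫ = 0) {θ₁ θ₂ p q : ℝ} (h1 : 0 ≤ θ₁) (h12 : θ₁ ≤ θ₂) (h2 : θ₂ ≤ Real.pi)
    (hp : 0 ≤ p) (hq : 0 ≤ q)
    (hc : p • (Real.cos θ₁ • u + Real.sin θ₁ • v)
        + q • (Real.cos θ₂ • u + Real.sin θ₂ • v) ≠ 0) :
    ∃ θ ∈ Set.Icc θ₁ θ₂,
      ‖p • (Real.cos θ₁ • u + Real.sin θ₁ • v) + q • (Real.cos θ₂ • u + Real.sin θ₂ • v)‖⁻¹ •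
        (p • (Real.cos θ₁ • u + Real.sin θ₁ • v) + q • (Real.cos θ₂ • u + Real.sin θ₂ • v)) =
      Real.cos θ • u + Real.sin θ • v := by
  set c₁ := Real.cos θ₁ with hc₁
  set s₁ := Real.sin θ₁ with hs₁def
  set c₂ := Real.cos θ₂ with hc₂
  set s₂ := Real.sin θ₂ with hs₂def
  set C := p * c₁ + q * c₂ with hCdef
  set S := p * s₁ + q * s₂ with hSdef
  have hw : p • (c₁ • u + s₁ • v) + q • (c₂ • u + s₂ • v) = C • u + S • v := by
    rw [hCdef, hSdef]; module
  rw [hw] at hc ⊢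
  set r := ‖C • u + S • v‖ with hrdef
  have hr : 0 < r := norm_pos_iff.2 hc
  have hr2 : r ^ 2 = C ^ 2 + S ^ 2 := by
    rw [hrdef, norm_add_sq_real, norm_smul, norm_smul, real_inner_smul_left,
      real_inner_smul_right, huv, hu, hv, Real.norm_eq_abs, Real.norm_eq_abs]
    ring_nf
    rw [sq_abs, sq_abs]
  have hs1 : 0 ≤ s₁ := Real.sin_nonneg_of_nonneg_of_le_pi h1 (h12.trans h2)
  have hs2 : 0 ≤ s₂ := Real.sin_nonneg_of_nonneg_of_le_pi (h1.trans h12) h2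
  have hS : 0 ≤ S := add_nonneg (mul_nonneg hp hs1) (mul_nonneg hq hs2)
  have hsin21 : 0 ≤ Real.sin (θ₂ - θ₁) :=
    Real.sin_nonneg_of_nonneg_of_le_pi (by linarith) (by linarith)
  have hpy1 : c₁ ^ 2 + s₁ ^ 2 = 1 := by
    rw [hc₁, hs₁def, add_comm]; exact Real.sin_sq_add_cos_sq θ₁
  have hpy2 : c₂ ^ 2 + s₂ ^ 2 = 1 := by
    rw [hc₂, hs₂def, add_comm]; exact Real.sin_sq_add_cos_sq θ₂
  have hBeq : S * c₁ - C * s₁ = q * Real.sin (θ₂ - θ₁) := by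
    rw [Real.sin_sub, hSdef, hCdef]; ring
  have hB'eq : C * s₂ - S * c₂ = p * Real.sin (θ₂ - θ₁) := by
    rw [Real.sin_sub, hSdef, hCdef]; ring
  have hB : 0 ≤ S * c₁ - C * s₁ := hBeq ▸ mul_nonneg hq hsin21
  have hB' : 0 ≤ C * s₂ - S * c₂ := hB'eq ▸ mul_nonneg hp hsin21
  have hD1 : C * c₁ + S * s₁ = p + q * Real.cos (θ₂ - θ₁) := by
    rw [Real.cos_sub, hCdef, hSdef]; linear_combination p * hpy1
  have hD2 : C * c₂ + S * s₂ = q + p * Real.cos (θ₂ - θ₁) := by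
    rw [Real.cos_sub, hCdef, hSdef]; linear_combination q * hpy2
  -- upper bound
  have hub : C ≤ r * c₁ := by
    refine aux_ub hr hr2 hpy1 hs1 hS hB (fun hcm1 => ?_)
    have hθ1 : θ₁ = Real.pi := by
      refine Real.injOn_cos (Set.mem_Icc.2 ⟨h1, h12.trans h2⟩)
        (Set.mem_Icc.2 ⟨Real.pi_pos.le, le_refl _⟩) ?_
      rw [Real.cos_pi, ← hc₁]; exact hcm1
    have hθ2 : θ₂ = Real.pi := le_antisymm h2 (hθ1 ▸ h12)
    rw [hθ1, hθ2, sub_self, Real.cos_zero] at hD1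
    rw [hD1]; linarith
  -- lower bound
  have hlb : r * c₂ ≤ C := by
    have hr2' : r ^ 2 = (-C) ^ 2 + S ^ 2 := by linear_combination hr2
    have hpy2' : (-c₂) ^ 2 + s₂ ^ 2 = 1 := by linear_combination hpy2
    have hB'' : 0 ≤ S * (-c₂) - (-C) * s₂ := by linarith [hB']
    have h := aux_ub hr hr2' hpy2' hs2 hS (by linear_combination (norm := ring_nf) hB''; linarith [hB'])
      (fun hcm1 => ?_)
    · have h2' : r * (-c₂) = -(r * c₂) := by ring
      rw [h2'] at h; linarith
    · have hc21 : c₂ = 1 := by linarith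
      have hθ2 : θ₂ = 0 := by
        refine Real.injOn_cos (Set.mem_Icc.2 ⟨h1.trans h12, h2⟩)
          (Set.mem_Icc.2 ⟨le_refl _, Real.pi_pos.le⟩) ?_
        rw [Real.cos_zero, ← hc₂]; exact hc21
      have hθ1 : θ₁ = 0 := le_antisymm (hθ2 ▸ h12) h1
      rw [hθ1, hθ2, sub_self, Real.cos_zero] at hD2
      have : (-C) * (-c₂) + S * s₂ = C * c₂ + S * s₂ := by ring
      rw [this, hD2]; linarith
  -- conclude
  have hCl : -r ≤ C := by nlinarith [Real.neg_one_le_cos θ₂]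
  have hCu : C ≤ r := by nlinarith [Real.cos_le_one θ₁]
  have hm1 : -1 ≤ C / r := by rw [neg_le, ← neg_div, div_le_one hr]; linarith
  have hp1 : C / r ≤ 1 := by rw [div_le_one hr]; exact hCu
  have hanti : Antitone Real.arccos := fun a b hab => by
    rw [Real.arccos_eq_pi_div_two_sub_arcsin, Real.arccos_eq_pi_div_two_sub_arcsin]
    linarith [Real.monotone_arcsin hab]
  refine ⟨Real.arccos (C / r), ⟨?_, ?_⟩, ?_⟩
  · calc θ₁ = Real.arccos c₁ := (Real.arccos_cos h1 (h12.trans h2)).symm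
      _ ≤ Real.arccos (C / r) := hanti (by rw [div_le_iff₀ hr]; linarith)
  · calc Real.arccos (C / r) ≤ Real.arccos c₂ := hanti (by rw [le_div_iff₀ hr]; linarith)
      _ = θ₂ := Real.arccos_cos (h1.trans h12) h2
  · rw [Real.cos_arccos hm1 hp1, Real.sin_arccos]
    have hsq : 1 - (C / r) ^ 2 = (S / r) ^ 2 := by
      field_simp
      linarith
    rw [hsq, Real.sqrt_sq (div_nonneg hS hr.le)]
    match_scalars <;> ring

/-- Normalizing is invariant under positive scaling. -/
lemma aux_normalize_smul {n : ℕ} (t : ℝ) (ht : 0 < t) (x : Esp n) :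
    ‖t • x‖⁻¹ • (t • x) = ‖x‖⁻¹ • x := by
  by_cases hx : x = 0
  · simp [hx]
  · rw [norm_smul, smul_smul, Real.norm_eq_abs, abs_of_pos ht]
    congr 1
    have hxn : ‖x‖ ≠ 0 := norm_ne_zero_iff.2 hx
    have htn : t ≠ 0 := ht.ne'
    field_simp

/-- The convex hull of a spherically convex set normalizes back into the set. -/
lemma aux_hull_subset {n : ℕ} {A : Set (Esp n)} (hA : A ⊆ sphereSet n) (hc : SphConvex A) :
    convexHull ℝ A ⊆ {x : Esp n | x = 0 ∨ ‖x‖⁻¹ • x ∈ A} := by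
  apply convexHull_min
  · intro a ha
    right
    have h1 : ‖a‖ = 1 := hA ha
    simpa [h1] using ha
  · intro x hx y hy a b ha hb hab
    have hz0 : ∀ w : Esp n, w ∈ A → w ≠ 0 := by
      intro w hw h0
      have := hA hw
      rw [h0] at this
      simp [sphereSet] at this
    -- helper for the degenerate cases
    have haux : ∀ (t : ℝ) (z : Esp n), 0 ≤ t → (z = 0 ∨ ‖z‖⁻¹ • z ∈ A) →
        (t • z = 0 ∨ ‖t • z‖⁻¹ • (t • z) ∈ A) := by
      intro t z htn hz
      rcases hz with hz | hz
      · left; rw [hz, smul_zero]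
      · rcases htn.lt_or_eq with ht | ht
        · right; rw [aux_normalize_smul t ht]; exact hz
        · left; rw [← ht, zero_smul]
    rcases hx with hx0 | hx1
    · rw [hx0, smul_zero, zero_add]
      exact haux b y hb hy
    rcases hy with hy0 | hy1
    · rw [hy0, smul_zero, add_zero]
      exact haux a x ha (Or.inr hx1)
    -- main case
    have hxne : x ≠ 0 := by
      intro h0
      exact hz0 _ hx1 (by rw [h0, smul_zero])
    have hyne : y ≠ 0 := by
      intro h0
      exact hz0 _ hy1 (by rw [h0, smul_zero])
    obtain ⟨Sg, ⟨u, v, α, hu, hv, huv, hα0, hαπ, hSeq⟩, hSA, hxS, hyS⟩ :=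
      hc _ hx1 _ hy1
    rw [hSeq] at hxS hyS
    obtain ⟨t₁, ht₁, hxv⟩ := hxS
    obtain ⟨t₂, ht₂, hyv⟩ := hyS
    have hxex : x = ‖x‖ • (‖x‖⁻¹ • x) := (smul_inv_smul₀ (norm_ne_zero_iff.2 hxne) x).symm
    have hyex : y = ‖y‖ • (‖y‖⁻¹ • y) := (smul_inv_smul₀ (norm_ne_zero_iff.2 hyne) y).symm
    have hkey : a • x + b • y
        = (a * ‖x‖) • (Real.cos t₁ • u + Real.sin t₁ • v)
        + (b * ‖y‖) • (Real.cos t₂ • u + Real.sin t₂ • v) := by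
      have hxv' : Real.cos t₁ • u + Real.sin t₁ • v = ‖x‖⁻¹ • x := hxv
      have hyv' : Real.cos t₂ • u + Real.sin t₂ • v = ‖y‖⁻¹ • y := hyv
      conv_lhs => rw [hxex, hyex]
      simp only [hxv', hyv', smul_smul, mul_assoc]
    rw [hkey]
    by_cases hzero : (a * ‖x‖) • (Real.cos t₁ • u + Real.sin t₁ • v)
        + (b * ‖y‖) • (Real.cos t₂ • u + Real.sin t₂ • v) = 0
    · left; exact hzero
    · right
      have hP : 0 ≤ a * ‖x‖ := mul_nonneg ha (norm_nonneg _)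
      have hQ : 0 ≤ b * ‖y‖ := mul_nonneg hb (norm_nonneg _)
      rcases le_total t₁ t₂ with hle | hle
      · obtain ⟨θ, hθ, heq⟩ := aux_lemA u v hu hv huv ht₁.1 hle (ht₂.2.trans hαπ) hP hQ hzero
        rw [heq]
        apply hSA
        rw [hSeq]
        exact ⟨θ, ⟨ht₁.1.trans hθ.1, hθ.2.trans ht₂.2⟩, rfl⟩
      · have hcomm : (a * ‖x‖) • (Real.cos t₁ • u + Real.sin t₁ • v)
            + (b * ‖y‖) • (Real.cos t₂ • u + Real.sin t₂ • v)
            = (b * ‖y‖) • (Real.cos t₂ • u + Real.sin t₂ • v)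
            + (a * ‖x‖) • (Real.cos t₁ • u + Real.sin t₁ • v) := add_comm _ _
        rw [hcomm] at hzero ⊢
        obtain ⟨θ, hθ, heq⟩ := aux_lemA u v hu hv huv ht₂.1 hle (ht₁.2.trans hαπ) hQ hP hzero
        rw [heq]
        apply hSA
        rw [hSeq]
        exact ⟨θ, ⟨ht₂.1.trans hθ.1, hθ.2.trans ht₁.2⟩, rfl⟩

/-- Lemma 2.2: a nonempty convex subset `A` of `Sⁿ` has nonempty interior in
the subspace topology of `Sⁿ ∩ span(A)`. -/
theorem sphConvex_relint_nonempty (n : ℕ) (hn : 1 ≤ n) (A : Set (Esp n))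
    (hA : A ⊆ sphereSet n) (hne : A.Nonempty) (hc : SphConvex A) :
    (interior (Subtype.val ⁻¹' A :
        Set ↥(sphereSet n ∩ (Submodule.span ℝ A : Set (Esp n))))).Nonempty := by
  classical
  set V : Submodule ℝ (Esp n) := Submodule.span ℝ A with hV
  obtain ⟨a₀, ha₀⟩ := hne
  -- the cone over the convex hull of A
  set K : Set (Esp n) := {w : Esp n | ∃ t : ℝ, 0 ≤ t ∧ ∃ x ∈ convexHull ℝ A, w = t • x}
    with hKdef
  have hhull : convexHull ℝ A ⊆ K := fun x hx => ⟨1, zero_le_one, x, hx, (one_smul ℝ x).symm⟩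
  have hAK : A ⊆ K := (subset_convexHull ℝ A).trans hhull
  have h0K : (0 : Esp n) ∈ K := ⟨0, le_refl _, a₀, subset_convexHull ℝ A ha₀, (zero_smul ℝ a₀).symm⟩
  have hKV : K ⊆ (V : Set (Esp n)) := by
    rintro w ⟨t, ht, x, hx, rfl⟩
    have hx' : x ∈ (V : Set (Esp n)) :=
      convexHull_min Submodule.subset_span V.convex hx
    exact V.smul_mem t hx'
  have hKconv : Convex ℝ K := by
    rintro w₁ ⟨t₁, ht₁, x₁, hx₁, rfl⟩ w₂ ⟨t₂, ht₂, x₂, hx₂, rfl⟩ a b ha hb hab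
    rcases eq_or_lt_of_le (add_nonneg (mul_nonneg ha ht₁) (mul_nonneg hb ht₂)) with hs | hs
    · -- a*t₁ + b*t₂ = 0, so both terms vanish
      have h1 : a * t₁ = 0 := by nlinarith [mul_nonneg ha ht₁, mul_nonneg hb ht₂]
      have h2 : b * t₂ = 0 := by nlinarith [mul_nonneg ha ht₁, mul_nonneg hb ht₂]
      have : a • t₁ • x₁ + b • t₂ • x₂ = (0 : Esp n) := by
        rw [smul_smul, smul_smul, h1, h2, zero_smul, zero_smul, add_zero]
      rw [this]; exact h0K
    · set s := a * t₁ + b * t₂ with hsdef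
      refine ⟨s, hs.le, (a * t₁ / s) • x₁ + (b * t₂ / s) • x₂, ?_, ?_⟩
      · exact (convex_convexHull ℝ A) hx₁ hx₂ (div_nonneg (mul_nonneg ha ht₁) hs.le)
          (div_nonneg (mul_nonneg hb ht₂) hs.le)
          (by field_simp; exact hsdef.symm)
      · rw [smul_add, smul_smul, smul_smul, smul_smul, smul_smul]
        congr 1 <;> congr 1 <;> field_simp <;> ring
  -- the affine span of K is V
  have hspan : (affineSpan ℝ K : Set (Esp n)) = (V : Set (Esp n)) := by
    apply Set.Subset.antisymm
    · have : affineSpan ℝ K ≤ V.toAffineSubspace := affineSpan_le.2 (by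
        intro w hw; exact Submodule.mem_toAffineSubspace.2 (hKV hw))
      intro z hz; exact Submodule.mem_toAffineSubspace.1 (this hz)
    · intro z hz
      have h1 : z ∈ Submodule.span ℝ K := Submodule.span_mono hAK (by rwa [← hV])
      have h2 : K ⊆ K -ᵥ K := by
        intro k hk
        exact ⟨k, hk, 0, h0K, by simp [vsub_eq_sub]⟩
      have h3 : z ∈ vectorSpan ℝ K := by
        rw [vectorSpan_def]
        exact Submodule.span_mono h2 h1
      have h4 : z ∈ (affineSpan ℝ K).direction := by rwa [direction_affineSpan]
      have h5 := AffineSubspace.vadd_mem_of_mem_direction h4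
        (mem_affineSpan ℝ h0K)
      simpa using h5
  -- K has nonempty interior in its affine span
  have hKne : K.Nonempty := ⟨0, h0K⟩
  obtain ⟨q₀, hq₀⟩ := hKne.intrinsicInterior hKconv
  rw [intrinsicInterior] at hq₀
  obtain ⟨q₀', hq₀int, hq₀eq⟩ := hq₀
  rw [mem_interior_iff_mem_nhds, Metric.mem_nhds_iff] at hq₀int
  obtain ⟨ε, hε, hball⟩ := hq₀int
  have hball' : ∀ z : Esp n, z ∈ (V : Set (Esp n)) → ‖z - q₀‖ < ε → z ∈ K := by
    intro z hzV hznear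
    have hzaff : z ∈ affineSpan ℝ K := by rw [← SetLike.mem_coe, hspan]; exact hzV
    have : (⟨z, hzaff⟩ : affineSpan ℝ K) ∈ Metric.ball q₀' ε := by
      rw [Metric.mem_ball, Subtype.dist_eq, hq₀eq, dist_eq_norm]
      exact hznear
    exact hball this
  have hq₀V : q₀ ∈ (V : Set (Esp n)) := by
    rw [← hspan, ← hq₀eq]; exact q₀'.2
  -- get a nonzero point with a ball condition
  obtain ⟨qq, hqqne, hqqV, ε', hε', hball''⟩ :
      ∃ qq : Esp n, qq ≠ 0 ∧ qq ∈ (V : Set (Esp n)) ∧ ∃ ε' : ℝ, 0 < ε' ∧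
        ∀ z : Esp n, z ∈ (V : Set (Esp n)) → ‖z - qq‖ < ε' → z ∈ K := by
    by_cases hq0 : q₀ = 0
    · refine ⟨(ε / 2) • a₀, ?_, ?_, ε / 2, by linarith, ?_⟩
      · intro h0
        have h1 : ‖(ε / 2) • a₀‖ = ε / 2 := by
          rw [norm_smul, Real.norm_eq_abs, abs_of_pos (by linarith), hA ha₀, mul_one]
        rw [h0, norm_zero] at h1
        linarith
      · exact V.smul_mem _ (Submodule.subset_span ha₀)
      · intro z hzV hznear
        apply hball' z hzV
        have h1 : ‖(ε / 2) • a₀‖ = ε / 2 := by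
          rw [norm_smul, Real.norm_eq_abs, abs_of_pos (by linarith), hA ha₀, mul_one]
        have h2 : ‖z - q₀‖ = ‖z‖ := by rw [hq0, sub_zero]
        rw [h2]
        calc ‖z‖ = ‖z - (ε / 2) • a₀ + (ε / 2) • a₀‖ := by rw [sub_add_cancel]
          _ ≤ ‖z - (ε / 2) • a₀‖ + ‖(ε / 2) • a₀‖ := norm_add_le _ _
          _ < ε / 2 + ε / 2 := by rw [h1]; linarith
          _ = ε := by ring
    · exact ⟨q₀, hq0, hq₀V, ε, hε, hball'⟩
  -- the normalized point and its neighborhood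
  have hqqnorm : ‖qq‖ ≠ 0 := norm_ne_zero_iff.2 hqqne
  have hqqpos : 0 < ‖qq‖ := norm_pos_iff.2 hqqne
  set x₀ : Esp n := ‖qq‖⁻¹ • qq with hx₀def
  have hx₀norm : ‖x₀‖ = 1 := norm_smul_inv_norm hqqne
  have hx₀V : x₀ ∈ (V : Set (Esp n)) := V.smul_mem _ hqqV
  have hx₀W : x₀ ∈ sphereSet n ∩ (V : Set (Esp n)) := ⟨hx₀norm, hx₀V⟩
  set δ : ℝ := ε' / ‖qq‖ with hδdef
  have hδ : 0 < δ := div_pos hε' hqqpos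
  have hsub : ∀ z : Esp n, z ∈ sphereSet n ∩ (V : Set (Esp n)) → ‖z - x₀‖ < δ → z ∈ A := by
    intro z hzW hznear
    have hz1 : ‖z‖ = 1 := hzW.1
    have h1 : ‖qq‖ • z ∈ (V : Set (Esp n)) := V.smul_mem _ hzW.2
    have h2 : ‖(‖qq‖ • z) - qq‖ < ε' := by
      have hqx : (‖qq‖ • z) - qq = ‖qq‖ • (z - x₀) := by
        rw [smul_sub, hx₀def, smul_smul, mul_inv_cancel₀ hqqnorm, one_smul]
      calc ‖(‖qq‖ • z) - qq‖ = ‖‖qq‖ • (z - x₀)‖ := by rw [hqx]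
        _ = ‖qq‖ * ‖z - x₀‖ := by rw [norm_smul, Real.norm_eq_abs, abs_of_pos hqqpos]
        _ < ‖qq‖ * δ := by
            exact mul_lt_mul_of_pos_left hznear hqqpos
        _ = ε' := by rw [hδdef]; field_simp
    obtain ⟨t, ht, xx, hxx, heq⟩ := hball'' _ h1 h2
    have hzne : ‖qq‖ • z ≠ 0 := by
      intro h0
      have := norm_eq_zero.2 h0
      rw [norm_smul, Real.norm_eq_abs, abs_of_pos hqqpos, hz1, mul_one] at this
      exact hqqnorm this
    have htpos : 0 < t := by
      rcases ht.lt_or_eq with h' | h'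
      · exact h'
      · exfalso; apply hzne; rw [heq, ← h', zero_smul]
    have hxxne : xx ≠ 0 := by
      intro h0; apply hzne; rw [heq, h0, smul_zero]
    have hnorm_eq : ‖qq‖ = ‖t • xx‖ := by
      rw [← heq, norm_smul, Real.norm_eq_abs, abs_of_pos hqqpos, hz1, mul_one]
    have hzeq : z = ‖t • xx‖⁻¹ • (t • xx) := by
      rw [← hnorm_eq, ← heq, smul_smul, inv_mul_cancel₀ hqqnorm, one_smul]
    rw [hzeq, aux_normalize_smul t htpos]
    rcases aux_hull_subset hA hc hxx with h0 | hmem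
    · exact absurd h0 hxxne
    · exact hmem
  -- conclude
  refine ⟨⟨x₀, hx₀W⟩, ?_⟩
  have hUopen : IsOpen ((fun p : ↥(sphereSet n ∩ (V : Set (Esp n))) => (p : Esp n)) ⁻¹'
      Metric.ball x₀ δ) := Metric.isOpen_ball.preimage continuous_subtype_val
  have hUsub : ((fun p : ↥(sphereSet n ∩ (V : Set (Esp n))) => (p : Esp n)) ⁻¹'
      Metric.ball x₀ δ) ⊆ Subtype.val ⁻¹' A := by
    intro p hp
    have : ‖(p : Esp n) - x₀‖ < δ := by
      rw [← dist_eq_norm]; exact hp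
    exact hsub _ p.2 this
  apply interior_maximal hUsub hUopen
  show x₀ ∈ Metric.ball x₀ δ
  simpa using hδ
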